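/- Let M be a real symmetric p×p matrix of rank r whose smallest nonzero singular value equals σ, and let Δ be a real symmetric p×p matrix with ‖Δ‖₂ ≤ σ/8 such that M+Δ also has rank r. Then ‖𝒫_{T(M)^⊥}(Δ)‖₂ ≤ ‖Δ‖₂² / σ. -/

import Mathlib

open Matrix MeasureTheory
open scoped Classical

noncomputable section

namespace LVGGM

variable {p h : ℕ}

/-- Spectral norm (largest singular value) of a real square matrix. -/
def specNorm (M : Matrix (Fin p) (Fin p) ℝ) : ℝ :=
  ‖Matrix.toEuclideanCLM (𝕜 := ℝ) M‖

/-- Entrywise max norm `‖M‖_∞`. -/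
def maxNorm (M : Matrix (Fin p) (Fin p) ℝ) : ℝ :=
  ⨆ i, ⨆ j, |M i j|

/-- Entrywise ℓ₁ norm `‖M‖₁`. -/
def l1Norm (M : Matrix (Fin p) (Fin p) ℝ) : ℝ :=
  ∑ i, ∑ j, |M i j|

/-- The matrix of the orthogonal projection of ℝ^p onto the column space of `M`. -/
def colProj (M : Matrix (Fin p) (Fin p) ℝ) : Matrix (Fin p) (Fin p) ℝ :=
  LinearMap.toMatrix (EuclideanSpace.basisFun (Fin p) ℝ).toBasis
    (EuclideanSpace.basisFun (Fin p) ℝ).toBasis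
    ((LinearMap.range (Matrix.toEuclideanLin M)).subtype ∘ₗ
      (Submodule.orthogonalProjectionOnto (LinearMap.range (Matrix.toEuclideanLin M))).toLinearMap)

/-- Singular values of a matrix, as square roots of eigenvalues of `Mᴴ M`. -/
def singVals (M : Matrix (Fin p) (Fin p) ℝ) (i : Fin p) : ℝ :=
  Real.sqrt ((Matrix.posSemidef_conjTranspose_mul_self M).1.eigenvalues i)

/-! ### Sparse tangent spaces -/

/-- Tangent space to the variety of sparse matrices at `M₀`. -/
def OmegaSet (M₀ : Matrix (Fin p) (Fin p) ℝ) : Set (Matrix (Fin p) (Fin p) ℝ) :=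
  {N | ∀ i j, M₀ i j = 0 → N i j = 0}

/-- Orthogonal projection onto `OmegaSet M₀`. -/
def projOmega (M₀ N : Matrix (Fin p) (Fin p) ℝ) : Matrix (Fin p) (Fin p) ℝ :=
  Matrix.of fun i j => if M₀ i j = 0 then 0 else N i j

/-- Orthogonal projection onto the orthogonal complement of `OmegaSet M₀`. -/
def projOmegaPerp (M₀ N : Matrix (Fin p) (Fin p) ℝ) : Matrix (Fin p) (Fin p) ℝ :=
  Matrix.of fun i j => if M₀ i j = 0 then N i j else 0

/-- `μ(Ω(M₀))`: max spectral norm over the `‖·‖_∞`-unit ball of `Ω(M₀)`. -/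
def muOmega (M₀ : Matrix (Fin p) (Fin p) ℝ) : ℝ :=
  ⨆ N : {N : Matrix (Fin p) (Fin p) ℝ // N ∈ OmegaSet M₀ ∧ maxNorm N ≤ 1}, specNorm N.1

/-! ### Low-rank tangent spaces (symmetric version) -/

/-- `𝒫_{T(M)}` for symmetric `M`: `N ↦ P N + N P − P N P` with `P` the column-space projector. -/
def projTsym (M N : Matrix (Fin p) (Fin p) ℝ) : Matrix (Fin p) (Fin p) ℝ :=
  colProj M * N + N * colProj M - colProj M * N * colProj M

/-- `𝒫_{T(M)^⊥}` for symmetric `M`: `N ↦ (I−P) N (I−P)`. -/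
def projTsymPerp (M N : Matrix (Fin p) (Fin p) ℝ) : Matrix (Fin p) (Fin p) ℝ :=
  (1 - colProj M) * N * (1 - colProj M)

/-- Tangent space to the variety of symmetric low-rank matrices at symmetric `M`. -/
def TsetSym (M : Matrix (Fin p) (Fin p) ℝ) : Set (Matrix (Fin p) (Fin p) ℝ) :=
  {N | N.IsHermitian ∧ projTsymPerp M N = 0}

/-- `ξ(T(M))` (symmetric version). -/
def xiT (M : Matrix (Fin p) (Fin p) ℝ) : ℝ :=
  ⨆ N : {N : Matrix (Fin p) (Fin p) ℝ // N ∈ TsetSym M ∧ specNorm N ≤ 1}, maxNorm N.1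

/-- `ρ(T(M₁), T(M₂))` (symmetric version). -/
def rhoSym (M₁ M₂ : Matrix (Fin p) (Fin p) ℝ) : ℝ :=
  ⨆ N : {N : Matrix (Fin p) (Fin p) ℝ // specNorm N ≤ 1},
    specNorm (projTsym M₁ N.1 - projTsym M₂ N.1)

/-! ### Low-rank tangent spaces (general version) -/

/-- `𝒫_{T(M)}` for general `M`: `N ↦ P_U N + N P_V − P_U N P_V`. -/
def projTgen (M N : Matrix (Fin p) (Fin p) ℝ) : Matrix (Fin p) (Fin p) ℝ :=
  colProj M * N + N * colProj Mᵀ - colProj M * N * colProj Mᵀ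

/-- `𝒫_{T(M)^⊥}` for general `M`. -/
def projTgenPerp (M N : Matrix (Fin p) (Fin p) ℝ) : Matrix (Fin p) (Fin p) ℝ :=
  (1 - colProj M) * N * (1 - colProj Mᵀ)

/-- Tangent space to the variety of low-rank matrices at a general matrix `M`. -/
def TsetGen (M : Matrix (Fin p) (Fin p) ℝ) : Set (Matrix (Fin p) (Fin p) ℝ) :=
  {N | projTgenPerp M N = 0}

/-- `ξ(T(M))` (general version). -/
def xiGen (M : Matrix (Fin p) (Fin p) ℝ) : ℝ :=
  ⨆ N : {N : Matrix (Fin p) (Fin p) ℝ // N ∈ TsetGen M ∧ specNorm N ≤ 1}, maxNorm N.1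

/-- Euclidean norm of the `i`-th column of `P`, i.e. `‖P e_i‖`. -/
def colEucNorm (P : Matrix (Fin p) (Fin p) ℝ) (i : Fin p) : ℝ :=
  Real.sqrt (∑ j, (P j i) ^ 2)

/-- Incoherence `inc(M)` of the row/column spaces of `M`. -/
def inc (M : Matrix (Fin p) (Fin p) ℝ) : ℝ :=
  max (⨆ i, colEucNorm (colProj M) i) (⨆ i, colEucNorm (colProj Mᵀ) i)

/-! ### Orthogonal projections onto arbitrary subspaces of matrices -/

/-- Matrices as vectors in the Euclidean space of entries (trace inner product). -/
def toELin : Matrix (Fin p) (Fin p) ℝ →ₗ[ℝ] EuclideanSpace ℝ (Fin p × Fin p) where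
  toFun M := WithLp.toLp 2 (fun q : Fin p × Fin p => M q.1 q.2)
  map_add' _ _ := rfl
  map_smul' _ _ := rfl

/-- Orthogonal projection (trace inner product) onto a subspace of matrices. -/
def matProj (T : Submodule ℝ (Matrix (Fin p) (Fin p) ℝ)) (N : Matrix (Fin p) (Fin p) ℝ) :
    Matrix (Fin p) (Fin p) ℝ :=
  Matrix.of fun i j => (Submodule.orthogonalProjectionOnto (T.map toELin) (toELin N) : EuclideanSpace ℝ (Fin p × Fin p)) (i, j)

/-- `ρ(T₁,T₂)` for arbitrary subspaces of matrices. -/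
def rhoSub (T₁ T₂ : Submodule ℝ (Matrix (Fin p) (Fin p) ℝ)) : ℝ :=
  ⨆ N : {N : Matrix (Fin p) (Fin p) ℝ // specNorm N ≤ 1},
    specNorm (matProj T₁ N.1 - matProj T₂ N.1)

/-- `ξ(T)` for an arbitrary subspace of matrices. -/
def xiSub (T : Submodule ℝ (Matrix (Fin p) (Fin p) ℝ)) : ℝ :=
  ⨆ N : {N : Matrix (Fin p) (Fin p) ℝ // N ∈ T ∧ specNorm N ≤ 1}, maxNorm N.1

/-! ### The dual norm g_γ -/

/-- `g_γ(S,L) = max(‖S‖_∞/γ, ‖L‖₂)`. -/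
def gNorm (γ : ℝ) (S L : Matrix (Fin p) (Fin p) ℝ) : ℝ :=
  max (maxNorm S / γ) (specNorm L)

/-- `g_γ(𝒜†(M)) = max(‖M‖_∞/γ, ‖M‖₂)`. -/
def gA (γ : ℝ) (M : Matrix (Fin p) (Fin p) ℝ) : ℝ :=
  max (maxNorm M / γ) (specNorm M)

/-! ### Latent-variable Fisher information setup -/

/-- `S* = K*_O`. -/
def Sstar (K : Matrix (Fin p ⊕ Fin h) (Fin p ⊕ Fin h) ℝ) : Matrix (Fin p) (Fin p) ℝ :=
  K.toBlocks₁₁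

/-- `L* = K*_{O,H} (K*_H)⁻¹ K*_{H,O}`. -/
def Lstar (K : Matrix (Fin p ⊕ Fin h) (Fin p ⊕ Fin h) ℝ) : Matrix (Fin p) (Fin p) ℝ :=
  K.toBlocks₁₂ * (K.toBlocks₂₂)⁻¹ * K.toBlocks₂₁

/-- `K̃*_O = S* − L*` (Schur complement). -/
def KtildeO (K : Matrix (Fin p ⊕ Fin h) (Fin p ⊕ Fin h) ℝ) : Matrix (Fin p) (Fin p) ℝ :=
  Sstar K - Lstar K

/-- `Σ*_O = (K̃*_O)⁻¹`. -/
def SigmaO (K : Matrix (Fin p ⊕ Fin h) (Fin p ⊕ Fin h) ℝ) : Matrix (Fin p) (Fin p) ℝ :=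
  (KtildeO K)⁻¹

/-- `ψ = ‖Σ*_O‖₂`. -/
def psi (K : Matrix (Fin p ⊕ Fin h) (Fin p ⊕ Fin h) ℝ) : ℝ :=
  specNorm (SigmaO K)

/-- Fisher information operator `ℐ*(M) = Σ*_O M Σ*_O`. -/
def Istar (K : Matrix (Fin p ⊕ Fin h) (Fin p ⊕ Fin h) ℝ) (M : Matrix (Fin p) (Fin p) ℝ) :
    Matrix (Fin p) (Fin p) ℝ :=
  SigmaO K * M * SigmaO K

/-- A nearby tangent space: `T' = T(M')` for a symmetric `M'` with the same rank as `Lst`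
and `ρ(T',T(Lst)) ≤ ξ(T(Lst))/2`. -/
def Nearby (Lst M' : Matrix (Fin p) (Fin p) ℝ) : Prop :=
  M'.IsHermitian ∧ M'.rank = Lst.rank ∧ rhoSym M' Lst ≤ xiT Lst / 2

/-- `α_Ω`. -/
def alphaOmega (K : Matrix (Fin p ⊕ Fin h) (Fin p ⊕ Fin h) ℝ) : ℝ :=
  ⨅ M : {M : Matrix (Fin p) (Fin p) ℝ // M ∈ OmegaSet (Sstar K) ∧ maxNorm M = 1},
    maxNorm (projOmega (Sstar K) (Istar K (projOmega (Sstar K) M.1)))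

/-- `δ_Ω`. -/
def deltaOmega (K : Matrix (Fin p ⊕ Fin h) (Fin p ⊕ Fin h) ℝ) : ℝ :=
  ⨆ M : {M : Matrix (Fin p) (Fin p) ℝ // M ∈ OmegaSet (Sstar K) ∧ maxNorm M = 1},
    maxNorm (projOmegaPerp (Sstar K) (Istar K (projOmega (Sstar K) M.1)))

/-- `β_Ω`. -/
def betaOmega (K : Matrix (Fin p ⊕ Fin h) (Fin p ⊕ Fin h) ℝ) : ℝ :=
  ⨆ M : {M : Matrix (Fin p) (Fin p) ℝ // M ∈ OmegaSet (Sstar K) ∧ specNorm M = 1},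
    specNorm (Istar K M.1)

/-- `α_T`. -/
def alphaTC (K : Matrix (Fin p ⊕ Fin h) (Fin p ⊕ Fin h) ℝ) : ℝ :=
  ⨅ x : {x : Matrix (Fin p) (Fin p) ℝ × Matrix (Fin p) (Fin p) ℝ //
      Nearby (Lstar K) x.1 ∧ x.2 ∈ TsetSym x.1 ∧ specNorm x.2 = 1},
    specNorm (projTsym x.1.1 (Istar K (projTsym x.1.1 x.1.2)))

/-- `δ_T`. -/
def deltaTC (K : Matrix (Fin p ⊕ Fin h) (Fin p ⊕ Fin h) ℝ) : ℝ :=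
  ⨆ x : {x : Matrix (Fin p) (Fin p) ℝ × Matrix (Fin p) (Fin p) ℝ //
      Nearby (Lstar K) x.1 ∧ x.2 ∈ TsetSym x.1 ∧ specNorm x.2 = 1},
    specNorm (projTsymPerp x.1.1 (Istar K (projTsym x.1.1 x.1.2)))

/-- `β_T`. -/
def betaTC (K : Matrix (Fin p ⊕ Fin h) (Fin p ⊕ Fin h) ℝ) : ℝ :=
  ⨆ x : {x : Matrix (Fin p) (Fin p) ℝ × Matrix (Fin p) (Fin p) ℝ //
      Nearby (Lstar K) x.1 ∧ x.2 ∈ TsetSym x.1 ∧ maxNorm x.2 = 1},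
    maxNorm (Istar K x.1.2)

/-- `α = min(α_Ω, α_T)`. -/
def alphaC (K : Matrix (Fin p ⊕ Fin h) (Fin p ⊕ Fin h) ℝ) : ℝ :=
  min (alphaOmega K) (alphaTC K)

/-- `δ = max(δ_Ω, δ_T)`. -/
def deltaC (K : Matrix (Fin p ⊕ Fin h) (Fin p ⊕ Fin h) ℝ) : ℝ :=
  max (deltaOmega K) (deltaTC K)

/-- `β = max(β_Ω, β_T)`. -/
def betaC (K : Matrix (Fin p ⊕ Fin h) (Fin p ⊕ Fin h) ℝ) : ℝ :=
  max (betaOmega K) (betaTC K)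

/-! ### Probability: iid Gaussian samples and sample covariance -/

/-- The square root of a positive-semidefinite matrix, as `Matrix.PosSemidef.sqrt` was defined
in the older Mathlib. -/
def psdSqrtOld {q : ℕ} {A : Matrix (Fin q) (Fin q) ℝ} (hA : A.PosSemidef) :
    Matrix (Fin q) (Fin q) ℝ :=
  hA.1.eigenvectorUnitary.1 * diagonal ((↑) ∘ (√·) ∘ hA.1.eigenvalues) *
    (star hA.1.eigenvectorUnitary : Matrix (Fin q) (Fin q) ℝ)

/-- The joint law of `n` i.i.d. samples from `N(0, S)` on `ℝ^p`, realized by pushing forward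
i.i.d. standard Gaussians through the positive-semidefinite square root of `S`. -/
def iidGaussian (n p : ℕ) (S : Matrix (Fin p) (Fin p) ℝ) : Measure (Fin n → Fin p → ℝ) :=
  if hS : S.PosSemidef then
    (Measure.pi fun _ : Fin n => Measure.pi fun _ : Fin p =>
        ProbabilityTheory.gaussianReal 0 1).map
      (fun Z => fun i => (psdSqrtOld hS).mulVec (Z i))
  else 0

/-- Sample covariance matrix of samples `X 1, …, X n`. -/
def sampleCov {p n : ℕ} (X : Fin n → Fin p → ℝ) : Matrix (Fin p) (Fin p) ℝ :=
  (n : ℝ)⁻¹ • ∑ i, Matrix.vecMulVec (X i) (X i)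

/-! ### Optimization programs -/

/-- Nuclear norm `‖M‖_*` (sum of singular values). -/
def nuclearNorm (M : Matrix (Fin p) (Fin p) ℝ) : ℝ :=
  (psdSqrtOld (Matrix.posSemidef_conjTranspose_mul_self M)).trace

/-- Objective of the program (sdp1): `tr((S−L)Σ) − log det(S−L) + λ(γ‖S‖₁ + tr(L))`. -/
def objSDP1 (Sig : Matrix (Fin p) (Fin p) ℝ) (lam gam : ℝ)
    (S L : Matrix (Fin p) (Fin p) ℝ) : ℝ :=
  ((S - L) * Sig).trace - Real.log (S - L).det + lam * (gam * l1Norm S + L.trace)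

/-- Feasibility for (sdp1): symmetric `S, L`, `S − L ≻ 0`, `L ⪰ 0`. -/
def FeasSDP1 (S L : Matrix (Fin p) (Fin p) ℝ) : Prop :=
  S.IsHermitian ∧ L.IsHermitian ∧ (S - L).PosDef ∧ L.PosSemidef

/-- `(S,L)` is an optimum of the program (sdp1). -/
def IsOptSDP1 (Sig : Matrix (Fin p) (Fin p) ℝ) (lam gam : ℝ)
    (S L : Matrix (Fin p) (Fin p) ℝ) : Prop :=
  FeasSDP1 S L ∧ ∀ S' L', FeasSDP1 S' L' →
    objSDP1 Sig lam gam S L ≤ objSDP1 Sig lam gam S' L'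

/-- Objective with the nuclear norm: `tr((S−L)Σ) − log det(S−L) + λ(γ‖S‖₁ + ‖L‖_*)`. -/
def objNuc (Sig : Matrix (Fin p) (Fin p) ℝ) (lam gam : ℝ)
    (S L : Matrix (Fin p) (Fin p) ℝ) : ℝ :=
  ((S - L) * Sig).trace - Real.log (S - L).det + lam * (gam * l1Norm S + nuclearNorm L)

/-- Feasibility for the tangent-space constrained program: symmetric, `S ∈ Ω(Sst)`,
`L ∈ T(M')`, `S − L ≻ 0`. -/
def FeasTS (Sst M' : Matrix (Fin p) (Fin p) ℝ) (S L : Matrix (Fin p) (Fin p) ℝ) : Prop :=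
  S.IsHermitian ∧ S ∈ OmegaSet Sst ∧ L ∈ TsetSym M' ∧ (S - L).PosDef

/-- Optimality for the tangent-space constrained program. -/
def IsOptTS (Sst M' Sig : Matrix (Fin p) (Fin p) ℝ) (lam gam : ℝ)
    (S L : Matrix (Fin p) (Fin p) ℝ) : Prop :=
  FeasTS Sst M' S L ∧ ∀ S' L', FeasTS Sst M' S' L' →
    objNuc Sig lam gam S L ≤ objNuc Sig lam gam S' L'

/-- Feasibility for the unconstrained nuclear-norm program: symmetric, `S − L ≻ 0`. -/
def FeasSy (S L : Matrix (Fin p) (Fin p) ℝ) : Prop :=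
  S.IsHermitian ∧ L.IsHermitian ∧ (S - L).PosDef

/-- Optimality for the unconstrained nuclear-norm program. -/
def IsOptSy (Sig : Matrix (Fin p) (Fin p) ℝ) (lam gam : ℝ)
    (S L : Matrix (Fin p) (Fin p) ℝ) : Prop :=
  FeasSy S L ∧ ∀ S' L', FeasSy S' L' →
    objNuc Sig lam gam S L ≤ objNuc Sig lam gam S' L'

/-! ### Spectral projectors and inertia -/

/-- Orthogonal projection onto the direct sum of the eigenspaces of a symmetric matrix `A`
corresponding to eigenvalues of magnitude less than `η`. -/
def spectralProjLT (A : Matrix (Fin p) (Fin p) ℝ) (η : ℝ) : Matrix (Fin p) (Fin p) ℝ :=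
  if hA : A.IsHermitian then
    ∑ i ∈ Finset.univ.filter (fun i => |hA.eigenvalues i| < η),
      Matrix.vecMulVec (fun j => hA.eigenvectorBasis i j) (fun j => hA.eigenvectorBasis i j)
  else 0

/-- `t` is an eigenvalue of `A`. -/
def hasEigval (A : Matrix (Fin p) (Fin p) ℝ) (t : ℝ) : Prop :=
  ∃ v : Fin p → ℝ, v ≠ 0 ∧ A.mulVec v = t • v

/-- Inertia (numbers of positive, negative, and zero eigenvalues) of a symmetric matrix. -/
def inertia (M : Matrix (Fin p) (Fin p) ℝ) : ℕ × ℕ × ℕ :=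
  if hM : M.IsHermitian then
    ((Finset.univ.filter fun i => 0 < hM.eigenvalues i).card,
     (Finset.univ.filter fun i => hM.eigenvalues i < 0).card,
     (Finset.univ.filter fun i => hM.eigenvalues i = 0).card)
  else (0, 0, 0)

end LVGGM

section AuxProof

open scoped RealInnerProductSpace
open Module

variable {E : Type*} [NormedAddCommGroup E] [InnerProductSpace ℝ E]

lemma aux_norm_le (A : E →L[ℝ] E) (hA : ∀ x y : E, ⟪A x, y⟫ = ⟪x, A y⟫)
    {K : ℝ} (hK : 0 ≤ K) (h : ∀ x : E, |⟪A x, x⟫| ≤ K * ‖x‖ ^ 2) : ‖A‖ ≤ K := by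
  have hunit : ∀ x y : E, ‖x‖ = 1 → ‖y‖ = 1 → ⟪A x, y⟫ ≤ K := by
    intro x y hx hy
    have h1 : ⟪A y, x⟫ = ⟪A x, y⟫ := by rw [hA y x, real_inner_comm]
    have hpol : 4 * ⟪A x, y⟫ = ⟪A (x + y), x + y⟫ - ⟪A (x - y), x - y⟫ := by
      simp only [map_add, map_sub, inner_add_left, inner_add_right, inner_sub_left,
        inner_sub_right]
      linarith
    have h2 := (abs_le.mp (h (x + y))).2
    have h3 := (abs_le.mp (h (x - y))).1
    have h4 := norm_add_sq_real x y
    have h5 := norm_sub_sq_real x y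
    have hx2 : ‖x‖ ^ 2 = 1 := by rw [hx]; norm_num
    have hy2 : ‖y‖ ^ 2 = 1 := by rw [hy]; norm_num
    nlinarith
  refine A.opNorm_le_bound hK fun x => ?_
  rcases eq_or_ne (A x) 0 with h0 | h0
  · rw [h0, norm_zero]; positivity
  have hx0 : x ≠ 0 := by rintro rfl; simp at h0
  have hxn : (0:ℝ) < ‖x‖ := norm_pos_iff.mpr hx0
  have hAxn : (0:ℝ) < ‖A x‖ := norm_pos_iff.mpr h0
  have := hunit (‖x‖⁻¹ • x) (‖A x‖⁻¹ • A x) (norm_smul_inv_norm hx0) (norm_smul_inv_norm h0)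
  rw [_root_.map_smul, real_inner_smul_left, real_inner_smul_right,
    real_inner_self_eq_norm_sq] at this
  have h6 : ‖x‖⁻¹ * (‖A x‖⁻¹ * ‖A x‖ ^ 2) = ‖A x‖ / ‖x‖ := by
    field_simp
  rw [h6, div_le_iff₀ hxn] at this
  linarith

lemma aux_orthogonal_range (T : E →ₗ[ℝ] E) (hT : ∀ x y : E, ⟪T x, y⟫ = ⟪x, T y⟫) :
    (LinearMap.range T)ᗮ = LinearMap.ker T := by
  ext x
  rw [Submodule.mem_orthogonal, LinearMap.mem_ker]
  constructor
  · intro h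
    have h1 : ⟪T x, T x⟫ = 0 := by
      have := h (T (T x)) (LinearMap.mem_range_self T (T x))
      rwa [hT (T x) x] at this
    exact inner_self_eq_zero.mp h1
  · rintro h u ⟨y, rfl⟩
    rw [hT y x, h, inner_zero_right]

lemma aux_scalar {σ ε c nw nb : ℝ} (hσ : 0 < σ) (hε0 : 0 ≤ ε) (hεσ : ε < σ)
    (hnw : 0 ≤ nw) (hnb : 0 ≤ nb)
    (hw2 : (σ^2 - ε^2) * nw^2 ≤ ε^2) (hb2 : nb^2 ≤ ε^2 - c^2)
    (hcb : |c| ≤ nw * nb) : |c| ≤ ε^2 / σ := by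
  have h1 : c^2 ≤ nw^2 * nb^2 := by
    nlinarith [abs_nonneg c, sq_abs c]
  have hσε : 0 < σ^2 - ε^2 := by nlinarith
  have h2 : c^2 * (σ^2 - ε^2) ≤ ε^2 * (ε^2 - c^2) := by
    calc c^2 * (σ^2-ε^2) ≤ (nw^2*nb^2) * (σ^2-ε^2) := by nlinarith
      _ = ((σ^2-ε^2) * nw^2) * nb^2 := by ring
      _ ≤ ε^2 * nb^2 := by nlinarith [sq_nonneg nb]
      _ ≤ ε^2 * (ε^2 - c^2) := by nlinarith [sq_nonneg ε]
  have h3 : c^2 * σ^2 ≤ ε^4 := by nlinarith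
  rw [le_div_iff₀ hσ]
  have h4 : (|c| * σ)^2 ≤ (ε^2)^2 := by
    rw [mul_pow, sq_abs]; nlinarith
  have h5 : 0 ≤ |c| * σ := mul_nonneg (abs_nonneg c) hσ.le
  nlinarith

set_option maxHeartbeats 1000000 in
lemma aux_inner_bound [FiniteDimensional ℝ E]
    (T D : E →ₗ[ℝ] E)
    (hT : ∀ x y : E, ⟪T x, y⟫ = ⟪x, T y⟫) (hD : ∀ x y : E, ⟪D x, y⟫ = ⟪x, D y⟫)
    {σ ε : ℝ} (hσ : 0 < σ) (hε0 : 0 ≤ ε) (hεσ : ε < σ)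
    (hDle : ∀ x : E, ‖D x‖ ≤ ε * ‖x‖)
    (hlow : ∀ x ∈ (LinearMap.ker T)ᗮ, σ * ‖x‖ ≤ ‖T x‖)
    (hrank : finrank ℝ (LinearMap.ker (T + D)) = finrank ℝ (LinearMap.ker T))
    (u : E) (hu : u ∈ LinearMap.ker T) (hu1 : ‖u‖ = 1) :
    |⟪D u, u⟫| ≤ ε ^ 2 / σ := by
  classical
  set K := LinearMap.ker T with hK
  set φ : LinearMap.ker (T + D) →ₗ[ℝ] K :=
    (Submodule.orthogonalProjectionOnto K).toLinearMap ∘ₗ (LinearMap.ker (T + D)).subtype with hφ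
  have hTu : T u = 0 := hu
  have hinj : Function.Injective φ := by
    rw [← LinearMap.ker_eq_bot, LinearMap.ker_eq_bot']
    intro x hx
    have hxo : (x : E) ∈ Kᗮ := by
      have h1 : Submodule.orthogonalProjectionOnto K (x : E) = 0 := hx
      exact Submodule.orthogonalProjectionOnto_eq_zero_iff.mp h1
    have h1 : σ * ‖(x:E)‖ ≤ ‖T (x:E)‖ := hlow _ hxo
    have h2 : T (x:E) + D (x:E) = 0 := x.2
    have h3 : T (x:E) = -D (x:E) := eq_neg_of_add_eq_zero_left h2
    have h4 : ‖T (x:E)‖ = ‖D (x:E)‖ := by rw [h3, norm_neg]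
    have h5 := hDle (x : E)
    have h6 : ‖(x:E)‖ = 0 := by nlinarith [norm_nonneg (x:E)]
    exact Subtype.ext (norm_eq_zero.mp h6)
  have hsurj : Function.Surjective φ := by
    have h1 : finrank ℝ (LinearMap.range φ) = finrank ℝ K := by
      rw [LinearMap.finrank_range_of_inj hinj, hrank]
    exact LinearMap.range_eq_top.mp (Submodule.eq_top_of_finrank_eq h1)
  obtain ⟨x, hx⟩ := hsurj ⟨u, hu⟩
  have hxproj : ((Submodule.orthogonalProjectionOnto K (x : E)) : E) = u := congrArg Subtype.val hx
  set w : E := u - (x : E) with hw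
  have hwmem : w ∈ Kᗮ := by
    have h1 : (x:E) - (Submodule.orthogonalProjectionOnto K (x:E) : E) ∈ Kᗮ :=
      Submodule.sub_starProjection_mem_orthogonal _
    rw [hxproj] at h1
    have h2 : w = -((x:E) - u) := by rw [hw]; abel
    rw [h2]
    exact Submodule.neg_mem _ h1
  have huw : ⟪u, w⟫ = 0 := hwmem u hu
  have hxe : (x : E) = u - w := by rw [hw]; abel
  have hxker : T (x:E) + D (x:E) = 0 := x.2
  have hTw : T w = D (x:E) := by
    have h1 : T w = T u - T (x:E) := by rw [hw, _root_.map_sub]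
    rw [h1, hTu, zero_sub, eq_neg_of_add_eq_zero_left hxker, neg_neg]
  have hxn2 : ‖(x:E)‖ ^ 2 = 1 + ‖w‖ ^ 2 := by
    rw [hxe, norm_sub_sq_real, hu1, huw]; ring
  have hwb : σ * ‖w‖ ≤ ε * ‖(x:E)‖ := by
    have h1 := hlow w hwmem
    rw [hTw] at h1
    exact h1.trans (hDle _)
  have hw2 : (σ^2 - ε^2) * ‖w‖^2 ≤ ε^2 := by
    have h2 := mul_le_mul hwb hwb (by positivity) (by positivity)
    nlinarith [norm_nonneg w, norm_nonneg (x:E)]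
  set c : ℝ := ⟪D u, u⟫ with hc
  have hDxu : ⟪D (x:E), u⟫ = 0 := by
    have h0 : ⟪T (x:E) + D (x:E), u⟫ = 0 := by rw [hxker, inner_zero_left]
    have h1 : ⟪T (x:E), u⟫ = 0 := by rw [hT, hTu, inner_zero_right]
    rw [inner_add_left, h1, zero_add] at h0
    exact h0
  have hcw : c = ⟪w, D u⟫ := by
    rw [hxe, _root_.map_sub, inner_sub_left] at hDxu
    rw [hc, ← hD w u]
    linarith
  obtain ⟨a, hamem, b, hbmem, hDuab⟩ : ∃ a ∈ K, ∃ b ∈ Kᗮ, D u = a + b :=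
    ⟨_, (Submodule.orthogonalProjectionOnto K (D u)).2, _, Submodule.sub_starProjection_mem_orthogonal (D u),
      by rw [Submodule.coe_orthogonalProjectionOnto_apply]; abel⟩
  have hwa : ⟪w, a⟫ = 0 := by rw [real_inner_comm]; exact hwmem a hamem
  have hcwb : c = ⟪w, b⟫ := by rw [hcw, hDuab, inner_add_right, hwa, zero_add]
  have hab : ⟪a, b⟫ = 0 := hbmem a hamem
  have hDu2 : ‖D u‖^2 = ‖a‖^2 + ‖b‖^2 := by
    rw [hDuab, norm_add_sq_real, hab]; ring
  have hca : |c| ≤ ‖a‖ := by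
    have hbu : ⟪b, u⟫ = 0 := by rw [real_inner_comm]; exact hbmem u hu
    have h1 : c = ⟪a, u⟫ := by
      rw [hc, hDuab, inner_add_left, hbu, add_zero]
    calc |c| ≤ ‖a‖ * ‖u‖ := h1 ▸ abs_real_inner_le_norm a u
      _ = ‖a‖ := by rw [hu1, mul_one]
  have hDun : ‖D u‖ ≤ ε := by simpa [hu1] using hDle u
  have hb2 : ‖b‖^2 ≤ ε^2 - c^2 := by nlinarith [abs_nonneg c, sq_abs c, norm_nonneg (D u), norm_nonneg a]
  have hcb : |c| ≤ ‖w‖ * ‖b‖ := hcwb ▸ abs_real_inner_le_norm w b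
  exact aux_scalar hσ hε0 hεσ (norm_nonneg w) (norm_nonneg b) hw2 hb2 hcb

lemma aux_rank {p : ℕ} (A : Matrix (Fin p) (Fin p) ℝ) :
    A.rank = finrank ℝ (LinearMap.range (Matrix.toEuclideanLin A)) := by
  rw [Matrix.toEuclideanLin_eq_toLin_orthonormal]
  exact Matrix.rank_eq_finrank_range_toLin A _ _

lemma aux_colProj_coe {p : ℕ} (M : Matrix (Fin p) (Fin p) ℝ) :
    Matrix.toEuclideanLin (LVGGM.colProj M) =
      (LinearMap.range (Matrix.toEuclideanLin M)).subtype ∘ₗ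
        (Submodule.orthogonalProjectionOnto (LinearMap.range (Matrix.toEuclideanLin M))).toLinearMap := by
  rw [LVGGM.colProj]
  exact Matrix.toLin_toMatrix (EuclideanSpace.basisFun (Fin p) ℝ).toBasis
    (EuclideanSpace.basisFun (Fin p) ℝ).toBasis _

lemma aux_sq_le {a b : ℝ} (ha : 0 ≤ a) (hb : 0 ≤ b) (h : a ^ 2 ≤ b ^ 2) : a ≤ b := by
  nlinarith

lemma aux_sing_lower {p : ℕ} {M : Matrix (Fin p) (Fin p) ℝ} (hM : M.IsHermitian)
    {σ : ℝ} (hσ : 0 < σ)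
    (hσmin : ∀ i, LVGGM.singVals M i = 0 ∨ σ ≤ LVGGM.singVals M i) :
    ∀ x ∈ (LinearMap.ker (Matrix.toEuclideanLin M))ᗮ,
      σ * ‖x‖ ≤ ‖Matrix.toEuclideanLin M x‖ := by
  classical
  set T := Matrix.toEuclideanLin M with hTdef
  have hTs : LinearMap.IsSymmetric T := Matrix.isHermitian_iff_isSymmetric.mp hM
  have hH := Matrix.posSemidef_conjTranspose_mul_self M
  set b := hH.1.eigenvectorBasis with hbdef
  set μ := hH.1.eigenvalues with hμdef
  have hμ0 : ∀ i, 0 ≤ μ i := fun i => hH.eigenvalues_nonneg i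
  have hμσ : ∀ i, μ i = 0 ∨ σ ^ 2 ≤ μ i := by
    intro i
    rcases hσmin i with hi | hi
    · left
      have h1 : Real.sqrt (μ i) = 0 := hi
      exact le_antisymm (Real.sqrt_eq_zero'.mp h1) (hμ0 i)
    · right
      have h1 : σ ≤ Real.sqrt (μ i) := hi
      nlinarith [Real.sq_sqrt (hμ0 i), Real.sqrt_nonneg (μ i)]
  have hHlin : Matrix.toEuclideanLin (Mᴴ * M) = T ∘ₗ T := by
    have h1 : Mᴴ = M := hM
    rw [h1, hTdef]
    exact Matrix.toLin_mul (EuclideanSpace.basisFun (Fin p) ℝ).toBasis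
      (EuclideanSpace.basisFun (Fin p) ℝ).toBasis
      (EuclideanSpace.basisFun (Fin p) ℝ).toBasis M M
  have hbe : ∀ i, Matrix.toEuclideanLin (Mᴴ * M) (b i) = μ i • b i := by
    intro i
    have h1 := hH.1.mulVec_eigenvectorBasis i
    apply (WithLp.equiv 2 (Fin p → ℝ)).injective
    rw [WithLp.equiv_apply, WithLp.equiv_apply, Matrix.piLp_ofLp_toEuclideanLin,
      Matrix.toLin'_apply, WithLp.ofLp_smul]
    exact h1
  intro x hx
  have hsym : LinearMap.IsSymmetric (Matrix.toEuclideanLin (Mᴴ * M)) :=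
    Matrix.isHermitian_iff_isSymmetric.mp hH.1
  have hinner : ∀ v : EuclideanSpace ℝ (Fin p),
      ⟪Matrix.toEuclideanLin (Mᴴ * M) v, v⟫ = ‖T v‖ ^ 2 := by
    intro v
    rw [hHlin, LinearMap.comp_apply, hTs (T v) v, real_inner_self_eq_norm_sq]
  have hker : ∀ i, μ i = 0 → (b i : EuclideanSpace ℝ (Fin p)) ∈ LinearMap.ker T := by
    intro i h0
    have h1 : ‖T (b i)‖ ^ 2 = 0 := by
      rw [← hinner (b i), hbe i, h0, zero_smul, inner_zero_left]
    rw [LinearMap.mem_ker, ← norm_eq_zero]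
    nlinarith [norm_nonneg (T (b i))]
  have hci : ∀ i, μ i = 0 → (⟪(b i : EuclideanSpace ℝ (Fin p)), x⟫ : ℝ) = 0 :=
    fun i h0 => hx _ (hker i h0)
  have hexp : ⟪Matrix.toEuclideanLin (Mᴴ * M) x, x⟫ = ∑ i, μ i * (⟪(b i : EuclideanSpace ℝ (Fin p)), x⟫ : ℝ) ^ 2 := by
    rw [← OrthonormalBasis.sum_inner_mul_inner b (Matrix.toEuclideanLin (Mᴴ * M) x) x]
    refine Finset.sum_congr rfl fun i _ => ?_
    rw [hsym x (b i), hbe i, real_inner_smul_right, real_inner_comm x (b i)]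
    ring
  have hnorm : ‖x‖ ^ 2 = ∑ i, (⟪(b i : EuclideanSpace ℝ (Fin p)), x⟫ : ℝ) ^ 2 := by
    have h1 := OrthonormalBasis.sum_inner_mul_inner b x x
    rw [real_inner_self_eq_norm_sq] at h1
    rw [← h1]
    refine Finset.sum_congr rfl fun i _ => ?_
    rw [real_inner_comm x (b i)]
    ring
  have hle : σ ^ 2 * ‖x‖ ^ 2 ≤ ‖T x‖ ^ 2 := by
    rw [← hinner x, hexp, hnorm, Finset.mul_sum]
    refine Finset.sum_le_sum fun i _ => ?_
    rcases hμσ i with h0 | h0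
    · rw [hci i h0, h0]; ring_nf; exact le_refl 0
    · nlinarith [sq_nonneg (⟪(b i : EuclideanSpace ℝ (Fin p)), x⟫ : ℝ)]
  have h2 : (σ * ‖x‖) ^ 2 ≤ ‖T x‖ ^ 2 := by rw [mul_pow]; linarith
  have h3 : 0 ≤ σ * ‖x‖ := by positivity
  calc σ * ‖x‖ = Real.sqrt ((σ * ‖x‖) ^ 2) := (Real.sqrt_sq h3).symm
    _ ≤ Real.sqrt (‖T x‖ ^ 2) := Real.sqrt_le_sqrt h2
    _ = ‖T x‖ := Real.sqrt_sq (norm_nonneg _)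



set_option maxHeartbeats 1000000

/-- Proposition: normal component of a rank-preserving perturbation.
If `M` is symmetric of rank `r` with smallest nonzero singular value `σ`, `Δ` is symmetric with
`‖Δ‖₂ ≤ σ/8`, and `M+Δ` also has rank `r`, then `‖𝒫_{T(M)^⊥}(Δ)‖₂ ≤ ‖Δ‖₂²/σ`. -/
theorem statement_1 {p : ℕ} (r : ℕ) (σ : ℝ) (M Δ : Matrix (Fin p) (Fin p) ℝ)
    (hM : M.IsHermitian) (hΔ : Δ.IsHermitian)
    (hrM : M.rank = r) (hrMΔ : (M + Δ).rank = r)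
    (hσpos : 0 < σ)
    (hσmin : ∀ i, LVGGM.singVals M i = 0 ∨ σ ≤ LVGGM.singVals M i)
    (hσex : ∃ i, LVGGM.singVals M i = σ)
    (hΔsmall : LVGGM.specNorm Δ ≤ σ / 8) :
    LVGGM.specNorm (LVGGM.projTsymPerp M Δ) ≤ (LVGGM.specNorm Δ) ^ 2 / σ := by
  classical
  have hTs : (Matrix.toEuclideanLin M).IsSymmetric := Matrix.isHermitian_iff_isSymmetric.mp hM
  have hDs : (Matrix.toEuclideanLin Δ).IsSymmetric := Matrix.isHermitian_iff_isSymmetric.mp hΔ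
  set ε := LVGGM.specNorm Δ with hε
  have hε0 : 0 ≤ ε := by
    rw [hε]; exact norm_nonneg _
  have hεσ : ε < σ := lt_of_le_of_lt hΔsmall (by linarith)
  have hDle : ∀ x : EuclideanSpace ℝ (Fin p), ‖Matrix.toEuclideanLin Δ x‖ ≤ ε * ‖x‖ := by
    intro x
    have h1 := (Matrix.toEuclideanCLM (𝕜 := ℝ) Δ).le_opNorm x
    have h2 : (Matrix.toEuclideanCLM (𝕜 := ℝ) Δ) x = Matrix.toEuclideanLin Δ x := by
      rw [← Matrix.coe_toEuclideanCLM_eq_toEuclideanLin]; rfl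
    rw [h2] at h1
    exact h1
  have hlow := aux_sing_lower hM hσpos hσmin
  have hrk : finrank ℝ (LinearMap.ker (Matrix.toEuclideanLin M + Matrix.toEuclideanLin Δ)) =
      finrank ℝ (LinearMap.ker (Matrix.toEuclideanLin M)) := by
    have h1 : Matrix.toEuclideanLin (M + Δ) =
        Matrix.toEuclideanLin M + Matrix.toEuclideanLin Δ := map_add _ _ _
    have h2 := aux_rank M
    have h3 := aux_rank (M + Δ)
    rw [h1] at h3
    rw [hrM] at h2
    rw [hrMΔ] at h3
    have h4 := LinearMap.finrank_range_add_finrank_ker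
      (Matrix.toEuclideanLin M + Matrix.toEuclideanLin Δ)
    have h5 := LinearMap.finrank_range_add_finrank_ker (Matrix.toEuclideanLin M)
    omega
  set R := LinearMap.range (Matrix.toEuclideanLin M) with hR
  have hRK : Rᗮ = LinearMap.ker (Matrix.toEuclideanLin M) := aux_orthogonal_range _ hTs
  set q : EuclideanSpace ℝ (Fin p) → EuclideanSpace ℝ (Fin p) :=
    fun x => x - (Submodule.orthogonalProjectionOnto R x : EuclideanSpace ℝ (Fin p)) with hq
  have hqK : ∀ x, q x ∈ LinearMap.ker (Matrix.toEuclideanLin M) := by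
    intro x
    rw [← hRK]
    exact Submodule.sub_starProjection_mem_orthogonal x
  have hqinner : ∀ y z : EuclideanSpace ℝ (Fin p), (⟪q y, z⟫ : ℝ) = ⟪y, q z⟫ := by
    intro y z
    rw [hq]
    simp only [inner_sub_left, inner_sub_right]
    rw [← Submodule.starProjection_apply, ← Submodule.starProjection_apply,
      Submodule.inner_starProjection_left_eq_right]
  have hqnorm : ∀ x : EuclideanSpace ℝ (Fin p), ‖q x‖ ≤ ‖x‖ := by
    intro x
    have h1 : (⟪(Submodule.orthogonalProjectionOnto R x : EuclideanSpace ℝ (Fin p)), q x⟫ : ℝ) = 0 :=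
      (Submodule.sub_starProjection_mem_orthogonal x) _ (SetLike.coe_mem _)
    have h2 : x = (Submodule.orthogonalProjectionOnto R x : EuclideanSpace ℝ (Fin p)) + q x := by
      rw [hq]; module
    have h3 : ‖x‖ ^ 2 = ‖(Submodule.orthogonalProjectionOnto R x : EuclideanSpace ℝ (Fin p))‖ ^ 2
        + ‖q x‖ ^ 2 := by
      nth_rewrite 1 [h2]
      rw [norm_add_sq_real, h1]
      ring
    refine aux_sq_le (norm_nonneg _) (norm_nonneg _) ?_
    nlinarith [sq_nonneg ‖(Submodule.orthogonalProjectionOnto R x : EuclideanSpace ℝ (Fin p))‖]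
  have hQapp : ∀ x : EuclideanSpace ℝ (Fin p),
      (Matrix.toEuclideanCLM (𝕜 := ℝ) (1 - LVGGM.colProj M)) x = q x := by
    intro x
    have h3 : (Matrix.toEuclideanCLM (𝕜 := ℝ) (LVGGM.colProj M)) x
        = (Submodule.orthogonalProjectionOnto R x : EuclideanSpace ℝ (Fin p)) := by
      have h4 : (Matrix.toEuclideanCLM (𝕜 := ℝ) (LVGGM.colProj M)) x
          = Matrix.toEuclideanLin (LVGGM.colProj M) x := by
        rw [← Matrix.coe_toEuclideanCLM_eq_toEuclideanLin]; rfl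
      rw [h4, aux_colProj_coe M]
      rfl
    rw [_root_.map_sub, _root_.map_one, ContinuousLinearMap.sub_apply, ContinuousLinearMap.one_apply, h3, hq]
  have hAc2 : Matrix.toEuclideanCLM (𝕜 := ℝ) (LVGGM.projTsymPerp M Δ) =
      Matrix.toEuclideanCLM (𝕜 := ℝ) (1 - LVGGM.colProj M) *
        (Matrix.toEuclideanCLM (𝕜 := ℝ) Δ *
          Matrix.toEuclideanCLM (𝕜 := ℝ) (1 - LVGGM.colProj M)) := by
    simp only [LVGGM.projTsymPerp]
    rw [_root_.map_mul, _root_.map_mul, mul_assoc]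
  have hAapp : ∀ x : EuclideanSpace ℝ (Fin p),
      (Matrix.toEuclideanCLM (𝕜 := ℝ) (LVGGM.projTsymPerp M Δ)) x
        = q (Matrix.toEuclideanLin Δ (q x)) := by
    intro x
    rw [hAc2]
    rw [ContinuousLinearMap.mul_apply, ContinuousLinearMap.mul_apply, hQapp, hQapp]
    have h7 : (Matrix.toEuclideanCLM (𝕜 := ℝ) Δ) (q x) = Matrix.toEuclideanLin Δ (q x) := by
      rw [← Matrix.coe_toEuclideanCLM_eq_toEuclideanLin]; rfl
    rw [h7]
  have hAinner : ∀ x y : EuclideanSpace ℝ (Fin p),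
      (⟪(Matrix.toEuclideanCLM (𝕜 := ℝ) (LVGGM.projTsymPerp M Δ)) x, y⟫ : ℝ)
        = ⟪Matrix.toEuclideanLin Δ (q x), q y⟫ := by
    intro x y
    rw [hAapp, hqinner (Matrix.toEuclideanLin Δ (q x)) y]
  have hAsym : ∀ x y : EuclideanSpace ℝ (Fin p),
      (⟪(Matrix.toEuclideanCLM (𝕜 := ℝ) (LVGGM.projTsymPerp M Δ)) x, y⟫ : ℝ)
        = ⟪x, (Matrix.toEuclideanCLM (𝕜 := ℝ) (LVGGM.projTsymPerp M Δ)) y⟫ := by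
    intro x y
    calc (⟪(Matrix.toEuclideanCLM (𝕜 := ℝ) (LVGGM.projTsymPerp M Δ)) x, y⟫ : ℝ)
        = ⟪Matrix.toEuclideanLin Δ (q x), q y⟫ := hAinner x y
      _ = ⟪q x, Matrix.toEuclideanLin Δ (q y)⟫ := hDs (q x) (q y)
      _ = ⟪Matrix.toEuclideanLin Δ (q y), q x⟫ := real_inner_comm _ _
      _ = ⟪(Matrix.toEuclideanCLM (𝕜 := ℝ) (LVGGM.projTsymPerp M Δ)) y, x⟫ :=
          (hAinner y x).symm
      _ = ⟪x, (Matrix.toEuclideanCLM (𝕜 := ℝ) (LVGGM.projTsymPerp M Δ)) y⟫ :=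
          real_inner_comm _ _
  have hbound : ∀ x : EuclideanSpace ℝ (Fin p),
      |(⟪(Matrix.toEuclideanCLM (𝕜 := ℝ) (LVGGM.projTsymPerp M Δ)) x, x⟫ : ℝ)|
        ≤ ε ^ 2 / σ * ‖x‖ ^ 2 := by
    intro x
    rw [hAinner x x]
    rcases eq_or_ne (q x) 0 with h0 | h0
    · rw [h0]
      simp only [inner_zero_right, abs_zero]
      positivity
    · have ht0 : ‖q x‖ ≠ 0 := norm_ne_zero_iff.mpr h0
      set t : ℝ := ‖q x‖ with htt
      set u : EuclideanSpace ℝ (Fin p) := t⁻¹ • q x with hu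
      have hu1 : ‖u‖ = 1 := by
        rw [hu, htt]; exact norm_smul_inv_norm h0
      have huK : u ∈ LinearMap.ker (Matrix.toEuclideanLin M) :=
        Submodule.smul_mem _ _ (hqK x)
      have hmain := aux_inner_bound (Matrix.toEuclideanLin M) (Matrix.toEuclideanLin Δ)
        hTs hDs hσpos hε0 hεσ hDle hlow hrk u huK hu1
      have hqx : q x = t • u := by rw [hu, smul_inv_smul₀ ht0]
      rw [hqx, _root_.map_smul, real_inner_smul_left, real_inner_smul_right]
      have ht : 0 ≤ t := by rw [htt]; exact norm_nonneg _
      have htx : t ≤ ‖x‖ := by rw [htt]; exact hqnorm x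
      have h5 : 0 ≤ ε ^ 2 / σ := by positivity
      rw [abs_mul, abs_mul, abs_of_nonneg ht]
      have h6 : t * t ≤ ‖x‖ * ‖x‖ := mul_le_mul htx htx ht (norm_nonneg x)
      nlinarith [abs_nonneg (⟪Matrix.toEuclideanLin Δ u, u⟫ : ℝ), hmain, ht, h5]
  show ‖Matrix.toEuclideanCLM (𝕜 := ℝ) (LVGGM.projTsymPerp M Δ)‖ ≤ ε ^ 2 / σ
  exact aux_norm_le _ hAsym (by positivity) hbound

end AuxProof
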